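/- For every prime p, with ζ := exp(2πi/p) ∈ ℂ, one has Σ_{k=1}^{p−1} (1+ζ^k)(1+ζ^{−k}) / ((1−ζ^k)(1−ζ^{−k})) = (p−1)(p−2)/3. -/

import Mathlib

open scoped BigOperators

/-- The primitive `p`-th root of unity `exp(2πi/p)`. -/
noncomputable def zetaP (p : ℕ) : ℂ := Complex.exp (2 * Real.pi * Complex.I / p)

/-- `(∑ j<n, j z^j)(z-1) = (n-1) z^n - (∑ j<n, z^j) + 1`. -/
lemma defect_aux_sum_mul (z : ℂ) (n : ℕ) :
    (∑ j ∈ Finset.range n, (j : ℂ) * z ^ j) * (z - 1)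
      = ((n : ℂ) - 1) * z ^ n - (∑ j ∈ Finset.range n, z ^ j) + 1 := by
  induction n with
  | zero => simp
  | succ n ih =>
    rw [Finset.sum_range_succ, Finset.sum_range_succ (f := fun j => z ^ j), add_mul, ih]
    push_cast
    ring

/-- If `z^p = 1` and `z ≠ 1` then `(∑ j<p, j z^j)(z-1) = p`. -/
lemma defect_aux_A (p : ℕ) (z : ℂ) (hz1 : z ≠ 1) (hzp : z ^ p = 1) :
    (∑ j ∈ Finset.range p, (j : ℂ) * z ^ j) * (z - 1) = (p : ℂ) := by
  have hne : z - 1 ≠ 0 := sub_ne_zero.mpr hz1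
  have hgeom : (∑ j ∈ Finset.range p, z ^ j) = 0 := by
    have h := geom_sum_mul z p
    rw [hzp, sub_self] at h
    exact (mul_eq_zero.mp h).resolve_right hne
  rw [defect_aux_sum_mul, hzp, hgeom]
  ring

lemma defect_sum_id (n : ℕ) :
    (∑ j ∈ Finset.range n, (j : ℂ)) = n * (n - 1) / 2 := by
  induction n with
  | zero => simp
  | succ n ih =>
    rw [Finset.sum_range_succ, ih]
    push_cast
    ring

lemma defect_sum_sq (n : ℕ) :
    (∑ j ∈ Finset.range n, (j : ℂ) ^ 2) = n * (n - 1) * (2 * n - 1) / 6 := by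
  induction n with
  | zero => simp
  | succ n ih =>
    rw [Finset.sum_range_succ, ih]
    push_cast
    ring

/-- The signature defect sum for local characters `(χ, χ⁻¹)` equals `(p−1)(p−2)/3`. -/
theorem defectSum_inv_eq (p : ℕ) (hp : p.Prime) :
    ∑ k ∈ Finset.Icc 1 (p - 1),
        ((1 + zetaP p ^ k) * (1 + zetaP p ^ (-(k : ℤ)))) /
          ((1 - zetaP p ^ k) * (1 - zetaP p ^ (-(k : ℤ)))) =
      ((p : ℂ) - 1) * ((p : ℂ) - 2) / 3 := by
  have hp1 : 1 < p := hp.one_lt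
  have hpn0 : p ≠ 0 := hp.pos.ne'
  have hpC : (p : ℂ) ≠ 0 := Nat.cast_ne_zero.mpr hpn0
  have hζ : IsPrimitiveRoot (zetaP p) p := Complex.isPrimitiveRoot_exp p hpn0
  set ζ : ℂ := zetaP p with hζdef
  have hζp : ζ ^ p = 1 := hζ.pow_eq_one
  have hζ0 : ζ ≠ 0 := by
    intro h
    rw [h] at hζp
    simp [zero_pow hpn0] at hζp
  set A : ℕ → ℂ := fun k => ∑ j ∈ Finset.range p, (j : ℂ) * (ζ ^ k) ^ j with hA
  set B : ℕ → ℂ := fun k => ∑ l ∈ Finset.range p, (l : ℂ) * ((ζ ^ k)⁻¹) ^ l with hB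
  -- termwise rewriting
  have hterm : ∀ k ∈ Finset.Icc 1 (p - 1),
      ((1 + ζ ^ k) * (1 + ζ ^ (-(k : ℤ)))) /
          ((1 - ζ ^ k) * (1 - ζ ^ (-(k : ℤ))))
        = 4 * (A k * B k) / (p : ℂ) ^ 2 - 1 := by
    intro k hk
    rw [Finset.mem_Icc] at hk
    have hk1 : 0 < k := hk.1
    have hkp : k < p := by omega
    have hz1 : ζ ^ k ≠ 1 := hζ.pow_ne_one_of_pos_of_lt hk1.ne' hkp
    have hz0 : ζ ^ k ≠ 0 := pow_ne_zero _ hζ0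
    have hzp : (ζ ^ k) ^ p = 1 := by
      rw [← pow_mul, mul_comm, pow_mul, hζp, one_pow]
    have hzinv : ζ ^ (-(k : ℤ)) = (ζ ^ k)⁻¹ := by
      rw [zpow_neg, zpow_natCast]
    have hzi1 : (ζ ^ k)⁻¹ ≠ 1 := fun h => hz1 (by rwa [inv_eq_one] at h)
    have hzip : ((ζ ^ k)⁻¹) ^ p = 1 := by rw [inv_pow, hzp, inv_one]
    have hAk : A k * (ζ ^ k - 1) = (p : ℂ) := defect_aux_A p (ζ ^ k) hz1 hzp
    have hBk : B k * ((ζ ^ k)⁻¹ - 1) = (p : ℂ) := defect_aux_A p ((ζ ^ k)⁻¹) hzi1 hzip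
    have hD1 : (1 : ℂ) - ζ ^ k ≠ 0 := sub_ne_zero.mpr (fun h => hz1 h.symm)
    have hD2 : (1 : ℂ) - (ζ ^ k)⁻¹ ≠ 0 := sub_ne_zero.mpr (fun h => hzi1 h.symm)
    have hD : ((1 : ℂ) - ζ ^ k) * (1 - (ζ ^ k)⁻¹) ≠ 0 := mul_ne_zero hD1 hD2
    have hzw : ζ ^ k * (ζ ^ k)⁻¹ = 1 := mul_inv_cancel₀ hz0
    have hABD : (A k * B k) * (((1 : ℂ) - ζ ^ k) * (1 - (ζ ^ k)⁻¹)) = (p : ℂ) ^ 2 := by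
      linear_combination (B k * ((ζ ^ k)⁻¹ - 1)) * hAk + (p : ℂ) * hBk
    have hnum : (1 + ζ ^ k) * (1 + (ζ ^ k)⁻¹)
        = 4 - ((1 : ℂ) - ζ ^ k) * (1 - (ζ ^ k)⁻¹) := by
      linear_combination 2 * hzw
    rw [hzinv, hnum, sub_div, div_self hD]
    congr 1
    rw [div_eq_div_iff hD (pow_ne_zero 2 hpC)]
    linear_combination (-4 : ℂ) * hABD
  rw [Finset.sum_congr rfl hterm]
  -- exponent manipulation
  have hpow : ∀ (k j l : ℕ), (ζ ^ k) ^ j * ((ζ ^ k)⁻¹) ^ l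
      = (ζ ^ ((j : ℤ) - (l : ℤ))) ^ k := by
    intro k j l
    have h1 : (ζ ^ k) ^ j = ζ ^ ((k * j : ℕ) : ℤ) := by
      rw [← pow_mul, zpow_natCast]
    have h2 : ((ζ ^ k)⁻¹) ^ l = ζ ^ (-((k * l : ℕ) : ℤ)) := by
      rw [inv_pow, ← pow_mul, ← zpow_natCast ζ, ← zpow_neg]
    have h3 : (ζ ^ ((j : ℤ) - (l : ℤ))) ^ k
        = ζ ^ (((j : ℤ) - (l : ℤ)) * (k : ℤ)) := by
      rw [← zpow_natCast (ζ ^ ((j : ℤ) - (l : ℤ))), ← zpow_mul]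
    rw [h1, h2, h3, ← zpow_add₀ hζ0]
    congr 1
    push_cast
    ring
  -- expand the products
  have hexp : ∀ k : ℕ, A k * B k = ∑ j ∈ Finset.range p, ∑ l ∈ Finset.range p,
      (j : ℂ) * (l : ℂ) * (ζ ^ ((j : ℤ) - (l : ℤ))) ^ k := by
    intro k
    rw [hA, hB]
    rw [Finset.sum_mul_sum]
    refine Finset.sum_congr rfl fun j _ => Finset.sum_congr rfl fun l _ => ?_
    rw [mul_mul_mul_comm, hpow k j l]
  -- the inner character sum
  have hinner : ∀ j ∈ Finset.range p, ∀ l ∈ Finset.range p,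
      (∑ k ∈ Finset.Icc 1 (p - 1), (ζ ^ ((j : ℤ) - (l : ℤ))) ^ k)
        = if j = l then (p : ℂ) - 1 else -1 := by
    intro j hj l hl
    have hj' := Finset.mem_range.mp hj
    have hl' := Finset.mem_range.mp hl
    set w : ℂ := ζ ^ ((j : ℤ) - (l : ℤ)) with hw
    have hIcc : Finset.Icc 1 (p - 1) = Finset.Ico 1 p := by
      rw [← Finset.Ico_add_one_right_eq_Icc]
      congr 1
      omega
    by_cases hjl : j = l
    · subst hjl
      have hwone : w = 1 := by rw [hw]; simp
      rw [if_pos rfl, hwone]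
      have h9 : p - 1 + 1 - 1 = p - 1 := by omega
      simp only [one_pow, Finset.sum_const, nsmul_eq_mul, mul_one, Nat.card_Icc, h9]
      rw [Nat.cast_sub (by omega : 1 ≤ p)]
      simp
    · have hwne : w ≠ 1 := by
        rw [hw, Ne, hζ.zpow_eq_one_iff_dvd]
        intro hdvd
        have hjZ : ((j : ℤ)) < p := by exact_mod_cast hj'
        have hlZ : ((l : ℤ)) < p := by exact_mod_cast hl'
        have hj0 : (0 : ℤ) ≤ (j : ℤ) := Int.natCast_nonneg j
        have hl0 : (0 : ℤ) ≤ (l : ℤ) := Int.natCast_nonneg l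
        have habs : |(j : ℤ) - (l : ℤ)| < p := abs_lt.mpr ⟨by omega, by omega⟩
        have h0 := Int.eq_zero_of_abs_lt_dvd hdvd habs
        exact hjl (by omega)
      have hwp : w ^ p = 1 := by
        rw [hw, ← zpow_natCast (ζ ^ ((j : ℤ) - (l : ℤ))), ← zpow_mul, mul_comm,
          zpow_mul, zpow_natCast, hζp, one_zpow]
      have hgeom : (∑ k ∈ Finset.range p, w ^ k) = 0 := by
        have h := geom_sum_mul w p
        rw [hwp, sub_self] at h
        exact (mul_eq_zero.mp h).resolve_right (sub_ne_zero.mpr hwne)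
      have hsplit : (∑ k ∈ Finset.range p, w ^ k)
          = 1 + ∑ k ∈ Finset.Icc 1 (p - 1), w ^ k := by
        rw [hIcc, Finset.range_eq_Ico, Finset.sum_eq_sum_Ico_succ_bot hp.pos]
        simp
      rw [hgeom] at hsplit
      rw [if_neg hjl]
      linear_combination (-1 : ℂ) * hsplit
  -- compute the double sum
  have hABsum : (∑ k ∈ Finset.Icc 1 (p - 1), A k * B k)
      = (p : ℂ) * (∑ j ∈ Finset.range p, (j : ℂ) ^ 2)
        - (∑ j ∈ Finset.range p, (j : ℂ)) ^ 2 := by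
    calc (∑ k ∈ Finset.Icc 1 (p - 1), A k * B k)
        = ∑ j ∈ Finset.range p, ∑ l ∈ Finset.range p,
            (j : ℂ) * (l : ℂ) *
              (∑ k ∈ Finset.Icc 1 (p - 1), (ζ ^ ((j : ℤ) - (l : ℤ))) ^ k) := by
          rw [Finset.sum_congr rfl (fun k _ => hexp k), Finset.sum_comm]
          refine Finset.sum_congr rfl fun j _ => ?_
          rw [Finset.sum_comm]
          exact Finset.sum_congr rfl fun l _ => (Finset.mul_sum _ _ _).symm
      _ = ∑ j ∈ Finset.range p, ∑ l ∈ Finset.range p,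
            ((if j = l then (j : ℂ) * (l : ℂ) * (p : ℂ) else 0) - (j : ℂ) * (l : ℂ)) := by
          refine Finset.sum_congr rfl fun j hj => Finset.sum_congr rfl fun l hl => ?_
          rw [hinner j hj l hl]
          by_cases h : j = l
          · rw [if_pos h, if_pos h]; ring
          · rw [if_neg h, if_neg h]; ring
      _ = ∑ j ∈ Finset.range p,
            ((j : ℂ) * (j : ℂ) * (p : ℂ) - ∑ l ∈ Finset.range p, (j : ℂ) * (l : ℂ)) := by
          refine Finset.sum_congr rfl fun j hj => ?_
          rw [Finset.sum_sub_distrib, Finset.sum_ite_eq, if_pos hj]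
      _ = (p : ℂ) * (∑ j ∈ Finset.range p, (j : ℂ) ^ 2)
            - (∑ j ∈ Finset.range p, (j : ℂ)) ^ 2 := by
          have e1 : (∑ j ∈ Finset.range p, (j : ℂ) * (j : ℂ) * (p : ℂ))
              = (p : ℂ) * (∑ j ∈ Finset.range p, (j : ℂ) ^ 2) := by
            rw [Finset.mul_sum]
            exact Finset.sum_congr rfl fun j _ => by ring
          have e2 : (∑ j ∈ Finset.range p, ∑ l ∈ Finset.range p, (j : ℂ) * (l : ℂ))
              = (∑ j ∈ Finset.range p, (j : ℂ)) ^ 2 := by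
            rw [sq, Finset.sum_mul_sum]
          rw [Finset.sum_sub_distrib, e1, e2]
  -- assemble
  have hcard : ((Finset.Icc 1 (p - 1)).card : ℂ) = (p : ℂ) - 1 := by
    rw [Nat.card_Icc]
    have h9 : p - 1 + 1 - 1 = p - 1 := by omega
    rw [h9, Nat.cast_sub (by omega : 1 ≤ p)]
    simp
  rw [Finset.sum_sub_distrib, ← Finset.sum_div, ← Finset.mul_sum, hABsum,
    Finset.sum_const, nsmul_eq_mul, mul_one, hcard, defect_sum_id, defect_sum_sq]
  field_simp
  ring
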